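/- Let n1, n2 be positive integers, let μ1 ∈ ℝ^{n1}, μ2 ∈ ℝ^{n2} have strictly positive entries with Σ_i μ1_i = Σ_j μ2_j, and let γ0 ∈ ℝ^{n1×n2} have strictly positive entries. Let γ* be the unique matrix in S ∩ C1 ∩ C2, where S = { diag(a)·γ0·diag(b) : a, b entrywise positive }, and set F(γ) = KL(γ*, γ). Let θ1 and θ2 be continuous real-valued functions on the set of entrywise positive n1×n2 matrices such that for k = 1, 2 and every entrywise positive γ: F(P^{θk(γ)}_{Ck}(γ)) ≤ F(γ), with strict inequality whenever γ ∉ Ck. Define the sequence γ^0 = γ0, γ̃^{ℓ+1} = P^{θ1(γ^ℓ)}_{C1}(γ^ℓ), γ^{ℓ+1} = P^{θ2(γ̃^{ℓ+1})}_{C2}(γ̃^{ℓ+1}). Then the sequence (γ^ℓ) converges to γ*. -/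

import Mathlib

open scoped BigOperators

/-- Kullback–Leibler divergence between two matrices with positive entries. -/
noncomputable def KL {n1 n2 : ℕ} (γ ξ : Matrix (Fin n1) (Fin n2) ℝ) : ℝ :=
  (∑ i, ∑ j, γ i j * (Real.log (γ i j / ξ i j) - 1)) + ∑ i, ∑ j, ξ i j

/-- The ω-overrelaxed projection onto `C1 = {γ : A1 γ = μ1}`. -/
noncomputable def P1 {n1 n2 : ℕ} (μ1 : Fin n1 → ℝ) (ω : ℝ)
    (γ : Matrix (Fin n1) (Fin n2) ℝ) : Matrix (Fin n1) (Fin n2) ℝ :=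
  Matrix.of fun i j => γ i j * (μ1 i / ∑ j', γ i j') ^ ω

/-- The ω-overrelaxed projection onto `C2 = {γ : A2 γ = μ2}`. -/
noncomputable def P2 {n1 n2 : ℕ} (μ2 : Fin n2 → ℝ) (ω : ℝ)
    (γ : Matrix (Fin n1) (Fin n2) ℝ) : Matrix (Fin n1) (Fin n2) ℝ :=
  Matrix.of fun i j => γ i j * (μ2 j / ∑ i', γ i' j) ^ ω

open Filter Topology

set_option maxHeartbeats 1000000

lemma gibbs_term (p q : ℝ) (hp : 0 < p) (hq : 0 < q) : p - q ≤ p * Real.log (p / q) := by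
  have h1 : Real.log (q / p) ≤ q / p - 1 := Real.log_le_sub_one_of_pos (by positivity)
  have h2 : Real.log (p / q) = Real.log p - Real.log q := Real.log_div hp.ne' hq.ne'
  have h3 : Real.log (q / p) = Real.log q - Real.log p := Real.log_div hq.ne' hp.ne'
  have h4 : p * (q / p) = q := by field_simp
  rw [h2]; rw [h3] at h1
  nlinarith [mul_le_mul_of_nonneg_left h1 hp.le]

lemma gibbs_eq (p q : ℝ) (hp : 0 < p) (hq : 0 < q)
    (h : p * Real.log (p / q) - p + q = 0) : p = q := by
  by_contra hne
  have hq1 : q / p ≠ 1 := by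
    intro h1; exact hne ((div_eq_one_iff_eq hp.ne').mp h1).symm
  have h1 : Real.log (q / p) < q / p - 1 := Real.log_lt_sub_one_of_pos (by positivity) hq1
  have h2 : Real.log (p / q) = Real.log p - Real.log q := Real.log_div hp.ne' hq.ne'
  have h3 : Real.log (q / p) = Real.log q - Real.log p := Real.log_div hq.ne' hp.ne'
  have h4 : p * (q / p) = q := by field_simp
  rw [h2] at h; rw [h3] at h1
  nlinarith [mul_lt_mul_of_pos_left h1 hp]

lemma entry_lower (a t c : ℝ) (ha : 0 < a) (ht : 0 < t)
    (h : a * Real.log (a / t) - a + t ≤ c) :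
    Real.exp (Real.log a - 1 - c / a) ≤ t := by
  have hlog : Real.log (a / t) = Real.log a - Real.log t := Real.log_div ha.ne' ht.ne'
  rw [hlog] at h
  have h2 : Real.log a - 1 - c / a ≤ Real.log t := by
    have h5 : a * (c / a) = c := by field_simp
    nlinarith
  calc Real.exp (Real.log a - 1 - c / a) ≤ Real.exp (Real.log t) := Real.exp_le_exp.mpr h2
    _ = t := Real.exp_log ht

lemma entry_upper (a t c : ℝ) (ha : 0 < a) (ht : 0 < t)
    (h : a * Real.log (a / t) - a + t ≤ c) :
    t ≤ 2 * c + 2 * Real.log 2 * a := by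
  have h1 : Real.log (t / (2 * a)) ≤ t / (2 * a) - 1 := Real.log_le_sub_one_of_pos (by positivity)
  have h2 : Real.log (t / (2 * a)) = Real.log t - (Real.log 2 + Real.log a) := by
    rw [Real.log_div ht.ne' (by positivity), Real.log_mul (by norm_num) ha.ne']
  have hlog : Real.log (a / t) = Real.log a - Real.log t := Real.log_div ha.ne' ht.ne'
  rw [hlog] at h; rw [h2] at h1
  have h3 : a * (Real.log t - (Real.log 2 + Real.log a)) ≤ a * (t / (2 * a) - 1) :=
    mul_le_mul_of_nonneg_left h1 ha.le
  have h4 : a * (t / (2 * a)) = t / 2 := by field_simp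
  nlinarith

lemma KL_eq {n1 n2 : ℕ} (p q : Matrix (Fin n1) (Fin n2) ℝ) :
    KL p q = ∑ i, ∑ j, (p i j * Real.log (p i j / q i j) - p i j + q i j) := by
  unfold KL
  rw [← Finset.sum_add_distrib]
  refine Finset.sum_congr rfl fun i _ => ?_
  rw [← Finset.sum_add_distrib]
  refine Finset.sum_congr rfl fun j _ => ?_
  ring

lemma KL_nonneg {n1 n2 : ℕ} (p q : Matrix (Fin n1) (Fin n2) ℝ)
    (hp : ∀ i j, 0 < p i j) (hq : ∀ i j, 0 < q i j) : 0 ≤ KL p q := by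
  rw [KL_eq]
  refine Finset.sum_nonneg fun i _ => Finset.sum_nonneg fun j _ => ?_
  have := gibbs_term (p i j) (q i j) (hp i j) (hq i j)
  linarith

lemma KL_term_le {n1 n2 : ℕ} (p q : Matrix (Fin n1) (Fin n2) ℝ)
    (hp : ∀ i j, 0 < p i j) (hq : ∀ i j, 0 < q i j) (i : Fin n1) (j : Fin n2) :
    p i j * Real.log (p i j / q i j) - p i j + q i j ≤ KL p q := by
  rw [KL_eq]
  have hnn : ∀ (i' : Fin n1) (j' : Fin n2),
      0 ≤ p i' j' * Real.log (p i' j' / q i' j') - p i' j' + q i' j' := by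
    intro i' j'
    have := gibbs_term (p i' j') (q i' j') (hp i' j') (hq i' j')
    linarith
  have h1 : p i j * Real.log (p i j / q i j) - p i j + q i j ≤
      ∑ j', (p i j' * Real.log (p i j' / q i j') - p i j' + q i j') :=
    Finset.single_le_sum (fun j' _ => hnn i j') (Finset.mem_univ j)
  have h2 : ∑ j', (p i j' * Real.log (p i j' / q i j') - p i j' + q i j') ≤
      ∑ i', ∑ j', (p i' j' * Real.log (p i' j' / q i' j') - p i' j' + q i' j') :=
    Finset.single_le_sum
      (fun i' _ => Finset.sum_nonneg fun j' _ => hnn i' j') (Finset.mem_univ i)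
  linarith

lemma unique_scaling {n1 n2 : ℕ} (μ1 : Fin n1 → ℝ) (μ2 : Fin n2 → ℝ)
    (x y : Matrix (Fin n1) (Fin n2) ℝ)
    (hx : ∀ i j, 0 < x i j) (hy : ∀ i j, 0 < y i j)
    (c : Fin n1 → ℝ) (d : Fin n2 → ℝ) (hc : ∀ i, 0 < c i) (hd : ∀ j, 0 < d j)
    (hxy : ∀ i j, x i j = c i * d j * y i j)
    (hx1 : ∀ i, ∑ j, x i j = μ1 i) (hx2 : ∀ j, ∑ i, x i j = μ2 j)
    (hy1 : ∀ i, ∑ j, y i j = μ1 i) (hy2 : ∀ j, ∑ i, y i j = μ2 j) : x = y := by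
  set g : Fin n1 → Fin n2 → ℝ := fun i j =>
    x i j * Real.log (x i j / y i j) + y i j * Real.log (y i j / x i j) with hg
  have hlogxy : ∀ i j, Real.log (x i j / y i j) = Real.log (c i) + Real.log (d j) := by
    intro i j
    have h1 : x i j / y i j = c i * d j := by
      rw [hxy i j, mul_div_assoc, div_self (hy i j).ne', mul_one]
    rw [h1, Real.log_mul (hc i).ne' (hd j).ne']
  have hlogyx : ∀ i j, Real.log (y i j / x i j) = -(Real.log (c i) + Real.log (d j)) := by
    intro i j
    have h1 : y i j / x i j = (c i * d j)⁻¹ := by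
      rw [hxy i j]; field_simp [(hy i j).ne', (hc i).ne', (hd j).ne']
    rw [h1, Real.log_inv, Real.log_mul (hc i).ne' (hd j).ne']
  have hgij : ∀ i j, g i j = (x i j - y i j) * Real.log (c i)
      + (x i j - y i j) * Real.log (d j) := by
    intro i j; simp only [hg]; rw [hlogxy, hlogyx]; ring
  have hgnn : ∀ i j, 0 ≤ g i j := by
    intro i j
    have h1 := gibbs_term (x i j) (y i j) (hx i j) (hy i j)
    have h2 := gibbs_term (y i j) (x i j) (hy i j) (hx i j)
    simp only [hg]; linarith
  have e1 : ∀ i, ∑ j, (x i j - y i j) * Real.log (c i) = 0 := by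
    intro i
    rw [← Finset.sum_mul]
    have h1 : ∑ j, (x i j - y i j) = 0 := by
      rw [Finset.sum_sub_distrib, hx1 i, hy1 i, sub_self]
    rw [h1, zero_mul]
  have e2 : ∀ j, ∑ i, (x i j - y i j) * Real.log (d j) = 0 := by
    intro j
    rw [← Finset.sum_mul]
    have h1 : ∑ i, (x i j - y i j) = 0 := by
      rw [Finset.sum_sub_distrib, hx2 j, hy2 j, sub_self]
    rw [h1, zero_mul]
  have hsum : ∑ i, ∑ j, g i j = 0 := by
    calc ∑ i, ∑ j, g i j
        = ∑ i, ((∑ j, (x i j - y i j) * Real.log (c i))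
            + ∑ j, (x i j - y i j) * Real.log (d j)) := by
          refine Finset.sum_congr rfl fun i _ => ?_
          rw [← Finset.sum_add_distrib]
          exact Finset.sum_congr rfl fun j _ => hgij i j
      _ = ∑ i, ∑ j, (x i j - y i j) * Real.log (d j) := by
          refine Finset.sum_congr rfl fun i _ => ?_
          rw [e1 i, zero_add]
      _ = ∑ j, ∑ i, (x i j - y i j) * Real.log (d j) := Finset.sum_comm
      _ = 0 := Finset.sum_eq_zero fun j _ => e2 j
  have hzero : ∀ i j, g i j = 0 := by
    intro i j
    have houter : ∀ i ∈ Finset.univ, (0:ℝ) ≤ ∑ j, g i j :=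
      fun i _ => Finset.sum_nonneg fun j _ => hgnn i j
    have h1 : ∑ j, g i j = 0 :=
      (Finset.sum_eq_zero_iff_of_nonneg houter).mp hsum i (Finset.mem_univ i)
    exact (Finset.sum_eq_zero_iff_of_nonneg fun j _ => hgnn i j).mp h1 j (Finset.mem_univ j)
  ext i j
  have h1 := gibbs_term (x i j) (y i j) (hx i j) (hy i j)
  have h2 := gibbs_term (y i j) (x i j) (hy i j) (hx i j)
  have h3 := hzero i j
  simp only [hg] at h3
  exact gibbs_eq (x i j) (y i j) (hx i j) (hy i j) (by linarith)

section
variable {n1 n2 : ℕ}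

lemma P1_pos [Nonempty (Fin n2)] (μ1 : Fin n1 → ℝ) (ω : ℝ) (γ : Matrix (Fin n1) (Fin n2) ℝ)
    (hμ1 : ∀ i, 0 < μ1 i) (hγ : ∀ i j, 0 < γ i j) : ∀ i j, 0 < P1 μ1 ω γ i j := by
  intro i j
  have hs : 0 < ∑ j', γ i j' := Finset.sum_pos (fun j' _ => hγ i j') Finset.univ_nonempty
  exact mul_pos (hγ i j) (Real.rpow_pos_of_pos (div_pos (hμ1 i) hs) ω)

lemma P2_pos [Nonempty (Fin n1)] (μ2 : Fin n2 → ℝ) (ω : ℝ) (γ : Matrix (Fin n1) (Fin n2) ℝ)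
    (hμ2 : ∀ j, 0 < μ2 j) (hγ : ∀ i j, 0 < γ i j) : ∀ i j, 0 < P2 μ2 ω γ i j := by
  intro i j
  have hs : 0 < ∑ i', γ i' j := Finset.sum_pos (fun i' _ => hγ i' j) Finset.univ_nonempty
  exact mul_pos (hγ i j) (Real.rpow_pos_of_pos (div_pos (hμ2 j) hs) ω)

lemma P1_fixed (μ1 : Fin n1 → ℝ) (ω : ℝ) (γ : Matrix (Fin n1) (Fin n2) ℝ)
    (hμ1 : ∀ i, 0 < μ1 i) (h : ∀ i, ∑ j, γ i j = μ1 i) : P1 μ1 ω γ = γ := by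
  ext i j
  show γ i j * (μ1 i / ∑ j', γ i j') ^ ω = γ i j
  rw [h i, div_self (hμ1 i).ne', Real.one_rpow, mul_one]

lemma inv_P1 (μ1 : Fin n1 → ℝ) (ω : ℝ) (γ γ0 : Matrix (Fin n1) (Fin n2) ℝ)
    (i0 : Fin n1) (j0 : Fin n2)
    (h : ∀ i j, γ i j * γ i0 j0 * (γ0 i j0 * γ0 i0 j) = γ i j0 * γ i0 j * (γ0 i j * γ0 i0 j0)) :
    ∀ i j, P1 μ1 ω γ i j * P1 μ1 ω γ i0 j0 * (γ0 i j0 * γ0 i0 j)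
      = P1 μ1 ω γ i j0 * P1 μ1 ω γ i0 j * (γ0 i j * γ0 i0 j0) := by
  intro i j
  show (γ i j * (μ1 i / ∑ j', γ i j') ^ ω) * (γ i0 j0 * (μ1 i0 / ∑ j', γ i0 j') ^ ω)
      * (γ0 i j0 * γ0 i0 j)
    = (γ i j0 * (μ1 i / ∑ j', γ i j') ^ ω) * (γ i0 j * (μ1 i0 / ∑ j', γ i0 j') ^ ω)
      * (γ0 i j * γ0 i0 j0)
  linear_combination ((μ1 i / ∑ j', γ i j') ^ ω * (μ1 i0 / ∑ j', γ i0 j') ^ ω) * h i j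

lemma inv_P2 (μ2 : Fin n2 → ℝ) (ω : ℝ) (γ γ0 : Matrix (Fin n1) (Fin n2) ℝ)
    (i0 : Fin n1) (j0 : Fin n2)
    (h : ∀ i j, γ i j * γ i0 j0 * (γ0 i j0 * γ0 i0 j) = γ i j0 * γ i0 j * (γ0 i j * γ0 i0 j0)) :
    ∀ i j, P2 μ2 ω γ i j * P2 μ2 ω γ i0 j0 * (γ0 i j0 * γ0 i0 j)
      = P2 μ2 ω γ i j0 * P2 μ2 ω γ i0 j * (γ0 i j * γ0 i0 j0) := by
  intro i j
  show (γ i j * (μ2 j / ∑ i', γ i' j) ^ ω) * (γ i0 j0 * (μ2 j0 / ∑ i', γ i' j0) ^ ω)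
      * (γ0 i j0 * γ0 i0 j)
    = (γ i j0 * (μ2 j0 / ∑ i', γ i' j0) ^ ω) * (γ i0 j * (μ2 j / ∑ i', γ i' j) ^ ω)
      * (γ0 i j * γ0 i0 j0)
  linear_combination ((μ2 j / ∑ i', γ i' j) ^ ω * (μ2 j0 / ∑ i', γ i' j0) ^ ω) * h i j

lemma contAt_eval (i : Fin n1) (j : Fin n2) (x : Matrix (Fin n1) (Fin n2) ℝ) :
    ContinuousAt (fun γ : Matrix (Fin n1) (Fin n2) ℝ => γ i j) x :=
  ((continuous_apply j).comp (continuous_apply i)).continuousAt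

lemma contAt_KL (p x : Matrix (Fin n1) (Fin n2) ℝ) (hp : ∀ i j, 0 < p i j)
    (hx : ∀ i j, 0 < x i j) : ContinuousAt (fun γ => KL p γ) x := by
  have hterm : ∀ (i : Fin n1) (j : Fin n2), ContinuousAt
      (fun γ : Matrix (Fin n1) (Fin n2) ℝ => p i j * (Real.log (p i j / γ i j) - 1)) x := by
    intro i j
    have hdiv : ContinuousAt (fun γ : Matrix (Fin n1) (Fin n2) ℝ => p i j / γ i j) x :=
      continuousAt_const.div (contAt_eval i j x) (hx i j).ne'
    have hlog : ContinuousAt (fun γ : Matrix (Fin n1) (Fin n2) ℝ =>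
        Real.log (p i j / γ i j)) x :=
      hdiv.log (div_pos (hp i j) (hx i j)).ne'
    exact continuousAt_const.mul (hlog.sub continuousAt_const)
  unfold KL
  apply ContinuousAt.add
  · exact tendsto_finset_sum _ fun i _ => tendsto_finset_sum _ fun j _ => hterm i j
  · exact tendsto_finset_sum _ fun i _ => tendsto_finset_sum _ fun j _ => contAt_eval i j x

lemma contAt_rowsum (i : Fin n1) (x : Matrix (Fin n1) (Fin n2) ℝ) :
    ContinuousAt (fun γ : Matrix (Fin n1) (Fin n2) ℝ => ∑ j', γ i j') x :=
  (continuous_finset_sum _ fun j' _ => (continuous_apply j').comp (continuous_apply i)).continuousAt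

lemma contAt_colsum (j : Fin n2) (x : Matrix (Fin n1) (Fin n2) ℝ) :
    ContinuousAt (fun γ : Matrix (Fin n1) (Fin n2) ℝ => ∑ i', γ i' j) x :=
  (continuous_finset_sum _ fun i' _ => (continuous_apply j).comp (continuous_apply i')).continuousAt

lemma contAt_P1 [Nonempty (Fin n2)] (μ1 : Fin n1 → ℝ) (θ : Matrix (Fin n1) (Fin n2) ℝ → ℝ)
    (x : Matrix (Fin n1) (Fin n2) ℝ) (hμ1 : ∀ i, 0 < μ1 i) (hx : ∀ i j, 0 < x i j)
    (hθ : ContinuousAt θ x) : ContinuousAt (fun γ => P1 μ1 (θ γ) γ) x := by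
  apply continuousAt_pi.mpr; intro i
  apply continuousAt_pi.mpr; intro j
  show ContinuousAt (fun γ : Matrix (Fin n1) (Fin n2) ℝ =>
    γ i j * (μ1 i / ∑ j', γ i j') ^ θ γ) x
  have hs : 0 < ∑ j', x i j' := Finset.sum_pos (fun j' _ => hx i j') Finset.univ_nonempty
  exact (contAt_eval i j x).mul
    ((continuousAt_const.div (contAt_rowsum i x) hs.ne').rpow hθ
      (Or.inl (div_pos (hμ1 i) hs).ne'))

lemma contAt_P2 [Nonempty (Fin n1)] (μ2 : Fin n2 → ℝ) (θ : Matrix (Fin n1) (Fin n2) ℝ → ℝ)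
    (x : Matrix (Fin n1) (Fin n2) ℝ) (hμ2 : ∀ j, 0 < μ2 j) (hx : ∀ i j, 0 < x i j)
    (hθ : ContinuousAt θ x) : ContinuousAt (fun γ => P2 μ2 (θ γ) γ) x := by
  apply continuousAt_pi.mpr; intro i
  apply continuousAt_pi.mpr; intro j
  show ContinuousAt (fun γ : Matrix (Fin n1) (Fin n2) ℝ =>
    γ i j * (μ2 j / ∑ i', γ i' j) ^ θ γ) x
  have hs : 0 < ∑ i', x i' j := Finset.sum_pos (fun i' _ => hx i' j) Finset.univ_nonempty
  exact (contAt_eval i j x).mul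
    ((continuousAt_const.div (contAt_colsum j x) hs.ne').rpow hθ
      (Or.inl (div_pos (hμ2 j) hs).ne'))

end


theorem stmt_4 (n1 n2 : ℕ) (hn1 : 0 < n1) (hn2 : 0 < n2)
    (μ1 : Fin n1 → ℝ) (μ2 : Fin n2 → ℝ)
    (hμ1 : ∀ i, 0 < μ1 i) (hμ2 : ∀ j, 0 < μ2 j)
    (hmass : ∑ i, μ1 i = ∑ j, μ2 j)
    (γ0 : Matrix (Fin n1) (Fin n2) ℝ) (hγ0 : ∀ i j, 0 < γ0 i j)
    -- γ* is the unique element of S ∩ C1 ∩ C2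
    (gstar : Matrix (Fin n1) (Fin n2) ℝ)
    (hgsS : ∃ a : Fin n1 → ℝ, ∃ b : Fin n2 → ℝ, (∀ i, 0 < a i) ∧ (∀ j, 0 < b j) ∧
      gstar = Matrix.of fun i j => a i * γ0 i j * b j)
    (hgs1 : ∀ i, ∑ j, gstar i j = μ1 i) (hgs2 : ∀ j, ∑ i, gstar i j = μ2 j)
    -- θ1, θ2 : continuous functions on the set of entrywise positive matrices
    (θ1 θ2 : Matrix (Fin n1) (Fin n2) ℝ → ℝ)
    (hθ1c : ContinuousOn θ1 {γ | ∀ i j, 0 < γ i j})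
    (hθ2c : ContinuousOn θ2 {γ | ∀ i j, 0 < γ i j})
    -- descent conditions, strict whenever γ ∉ C_k
    (hθ1d : ∀ γ : Matrix (Fin n1) (Fin n2) ℝ, (∀ i j, 0 < γ i j) →
      KL gstar (P1 μ1 (θ1 γ) γ) ≤ KL gstar γ)
    (hθ1s : ∀ γ : Matrix (Fin n1) (Fin n2) ℝ, (∀ i j, 0 < γ i j) →
      ¬ (∀ i, ∑ j, γ i j = μ1 i) → KL gstar (P1 μ1 (θ1 γ) γ) < KL gstar γ)
    (hθ2d : ∀ γ : Matrix (Fin n1) (Fin n2) ℝ, (∀ i j, 0 < γ i j) →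
      KL gstar (P2 μ2 (θ2 γ) γ) ≤ KL gstar γ)
    (hθ2s : ∀ γ : Matrix (Fin n1) (Fin n2) ℝ, (∀ i j, 0 < γ i j) →
      ¬ (∀ j, ∑ i, γ i j = μ2 j) → KL gstar (P2 μ2 (θ2 γ) γ) < KL gstar γ)
    -- the iteration
    (γseq : ℕ → Matrix (Fin n1) (Fin n2) ℝ)
    (h0 : γseq 0 = γ0)
    (hrec : ∀ ℓ, γseq (ℓ + 1) =
      P2 μ2 (θ2 (P1 μ1 (θ1 (γseq ℓ)) (γseq ℓ))) (P1 μ1 (θ1 (γseq ℓ)) (γseq ℓ))) :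
    Filter.Tendsto γseq Filter.atTop (nhds gstar) := by
  classical
  haveI : FirstCountableTopology (Matrix (Fin n1) (Fin n2) ℝ) :=
    inferInstanceAs (FirstCountableTopology (Fin n1 → Fin n2 → ℝ))
  haveI hNE1 : Nonempty (Fin n1) := ⟨⟨0, hn1⟩⟩
  haveI hNE2 : Nonempty (Fin n2) := ⟨⟨0, hn2⟩⟩
  set i0 : Fin n1 := ⟨0, hn1⟩ with hi0
  set j0 : Fin n2 := ⟨0, hn2⟩ with hj0
  obtain ⟨a', b', ha', hb', hgseq⟩ := hgsS
  have hgsp : ∀ i j, 0 < gstar i j := by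
    intro i j; rw [hgseq]
    exact mul_pos (mul_pos (ha' i) (hγ0 i j)) (hb' j)
  have hUopen : IsOpen {γ : Matrix (Fin n1) (Fin n2) ℝ | ∀ i j, 0 < γ i j} := by
    have he : {γ : Matrix (Fin n1) (Fin n2) ℝ | ∀ i j, 0 < γ i j}
        = ⋂ i, ⋂ j, {γ : Matrix (Fin n1) (Fin n2) ℝ | 0 < γ i j} := by
      ext γ; simp [Set.mem_iInter]
    rw [he]
    exact isOpen_iInter_of_finite fun i => isOpen_iInter_of_finite fun j =>
      IsOpen.preimage
        (show Continuous fun γ : Matrix (Fin n1) (Fin n2) ℝ => γ i j from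
          (continuous_apply j).comp (continuous_apply i)) isOpen_Ioi
  have hpos : ∀ ℓ, ∀ i j, 0 < γseq ℓ i j := by
    intro ℓ; induction ℓ with
    | zero => rw [h0]; exact hγ0
    | succ ℓ ih => rw [hrec]; exact P2_pos _ _ _ hμ2 (P1_pos _ _ _ hμ1 ih)
  have hstep : ∀ ℓ, KL gstar (γseq (ℓ + 1)) ≤ KL gstar (γseq ℓ) := by
    intro ℓ; rw [hrec]
    exact le_trans (hθ2d _ (P1_pos _ _ _ hμ1 (hpos ℓ))) (hθ1d _ (hpos ℓ))
  have hFanti : Antitone (fun ℓ => KL gstar (γseq ℓ)) := antitone_nat_of_succ_le hstep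
  have hFnn : ∀ ℓ, 0 ≤ KL gstar (γseq ℓ) := fun ℓ => KL_nonneg _ _ hgsp (hpos ℓ)
  set c := KL gstar (γseq 0) with hc
  have hFc : ∀ ℓ, KL gstar (γseq ℓ) ≤ c := fun ℓ => hFanti (Nat.zero_le ℓ)
  set Sg := ∑ i, ∑ j, gstar i j with hSg
  set M := 2 * c + 2 * Real.log 2 * Sg with hM
  set ε := Finset.univ.inf' Finset.univ_nonempty
      (fun p : Fin n1 × Fin n2 =>
        Real.exp (Real.log (gstar p.1 p.2) - 1 - c / gstar p.1 p.2)) with hε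
  have hεpos : 0 < ε := by
    rw [hε]
    exact (Finset.lt_inf'_iff _).mpr fun p _ => Real.exp_pos _
  have hbox : ∀ γ : Matrix (Fin n1) (Fin n2) ℝ, (∀ i j, 0 < γ i j) → KL gstar γ ≤ c →
      ∀ i j, γ i j ∈ Set.Icc ε M := by
    intro γ hγ hKL i j
    have hterm : gstar i j * Real.log (gstar i j / γ i j) - gstar i j + γ i j ≤ c :=
      le_trans (KL_term_le gstar γ hgsp hγ i j) hKL
    constructor
    · refine le_trans (Finset.inf'_le _ (Finset.mem_univ (i, j))) ?_
      exact entry_lower _ _ _ (hgsp i j) (hγ i j) hterm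
    · have h1 := entry_upper _ _ _ (hgsp i j) (hγ i j) hterm
      have h2 : gstar i j ≤ Sg := by
        rw [hSg]
        have h3 : gstar i j ≤ ∑ j', gstar i j' :=
          Finset.single_le_sum (fun j' _ => (hgsp i j').le) (Finset.mem_univ j)
        have h4 : ∑ j', gstar i j' ≤ ∑ i', ∑ j', gstar i' j' :=
          Finset.single_le_sum
            (fun i' _ => Finset.sum_nonneg fun j' _ => (hgsp i' j').le) (Finset.mem_univ i)
        linarith
      have hl2 : 0 < Real.log 2 := Real.log_pos (by norm_num)
      rw [hM]; nlinarith
  have hKcompact : IsCompact {γ : Matrix (Fin n1) (Fin n2) ℝ | ∀ i j, γ i j ∈ Set.Icc ε M} := by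
    have he : {γ : Matrix (Fin n1) (Fin n2) ℝ | ∀ i j, γ i j ∈ Set.Icc ε M}
        = Set.univ.pi (fun _ : Fin n1 => Set.univ.pi fun _ : Fin n2 => Set.Icc ε M) := by
      ext γ
      exact ⟨fun h i _ j _ => h i j, fun h i j => h i (Set.mem_univ i) j (Set.mem_univ j)⟩
    rw [he]
    exact isCompact_univ_pi fun _ => isCompact_univ_pi fun _ => isCompact_Icc
  have hseqK : ∀ ℓ, γseq ℓ ∈ {γ : Matrix (Fin n1) (Fin n2) ℝ | ∀ i j, γ i j ∈ Set.Icc ε M} :=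
    fun ℓ => hbox _ (hpos ℓ) (hFc ℓ)
  have hbdd : BddBelow (Set.range fun ℓ => KL gstar (γseq ℓ)) := by
    refine ⟨0, ?_⟩; rintro y ⟨ℓ, rfl⟩; exact hFnn ℓ
  set L := ⨅ ℓ, KL gstar (γseq ℓ) with hLdef
  have hLtend : Tendsto (fun ℓ => KL gstar (γseq ℓ)) atTop (𝓝 L) :=
    tendsto_atTop_ciInf hFanti hbdd
  have hInvSeq : ∀ ℓ i j, γseq ℓ i j * γseq ℓ i0 j0 * (γ0 i j0 * γ0 i0 j)
      = γseq ℓ i j0 * γseq ℓ i0 j * (γ0 i j * γ0 i0 j0) := by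
    intro ℓ; induction ℓ with
    | zero => intro i j; rw [h0]; ring
    | succ ℓ ih =>
      intro i j; rw [hrec]
      exact inv_P2 _ _ _ _ i0 j0 (inv_P1 _ _ _ _ i0 j0 ih) i j
  -- key: every limit of the sequence along a subsequence equals gstar
  have key : ∀ ψ : ℕ → ℕ, Tendsto ψ atTop atTop →
      ∀ x : Matrix (Fin n1) (Fin n2) ℝ, Tendsto (fun k => γseq (ψ k)) atTop (𝓝 x) →
      (∀ i j, x i j ∈ Set.Icc ε M) → x = gstar := by
    intro ψ hψ x hconv hxK
    have hxpos : ∀ i j, 0 < x i j := fun i j => lt_of_lt_of_le hεpos (hxK i j).1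
    have hxU : x ∈ {γ : Matrix (Fin n1) (Fin n2) ℝ | ∀ i j, 0 < γ i j} := hxpos
    have hθ1At : ContinuousAt θ1 x := hθ1c.continuousAt (hUopen.mem_nhds hxU)
    have hθ2At : ContinuousAt θ2 x := hθ2c.continuousAt (hUopen.mem_nhds hxU)
    have hFAt : ContinuousAt (fun γ => KL gstar γ) x := contAt_KL gstar x hgsp hxpos
    have hFxL : KL gstar x = L :=
      tendsto_nhds_unique (hFAt.tendsto.comp hconv) (hLtend.comp hψ)
    have hT1pos : ∀ i j, 0 < P1 μ1 (θ1 x) x i j := P1_pos _ _ _ hμ1 hxpos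
    have hT1At : ContinuousAt (fun γ => P1 μ1 (θ1 γ) γ) x := contAt_P1 μ1 θ1 x hμ1 hxpos hθ1At
    have hshift : Tendsto (fun k => ψ k + 1) atTop atTop :=
      (tendsto_add_atTop_nat 1).comp hψ
    have hlow : Tendsto (fun k => KL gstar (γseq (ψ k + 1))) atTop (𝓝 L) := hLtend.comp hshift
    have hup : Tendsto (fun k => KL gstar (γseq (ψ k))) atTop (𝓝 L) := hLtend.comp hψ
    have hT1tendL : Tendsto (fun k => KL gstar (P1 μ1 (θ1 (γseq (ψ k))) (γseq (ψ k))))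
        atTop (𝓝 L) := by
      refine tendsto_of_tendsto_of_tendsto_of_le_of_le hlow hup ?_ ?_
      · intro k
        have h := hθ2d (P1 μ1 (θ1 (γseq (ψ k))) (γseq (ψ k)))
          (P1_pos _ _ _ hμ1 (hpos (ψ k)))
        rw [← hrec (ψ k)] at h
        exact h
      · intro k; exact hθ1d (γseq (ψ k)) (hpos (ψ k))
    have hcomp1 : ContinuousAt (fun γ => KL gstar (P1 μ1 (θ1 γ) γ)) x :=
      ContinuousAt.comp (f := fun γ => P1 μ1 (θ1 γ) γ)
        (contAt_KL gstar _ hgsp hT1pos) hT1At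
    have hT1tendF : Tendsto (fun k => KL gstar (P1 μ1 (θ1 (γseq (ψ k))) (γseq (ψ k)))) atTop
        (𝓝 (KL gstar (P1 μ1 (θ1 x) x))) :=
      (hcomp1.tendsto).comp hconv
    have hFT1 : KL gstar (P1 μ1 (θ1 x) x) = L := tendsto_nhds_unique hT1tendF hT1tendL
    have hxC1 : ∀ i, ∑ j, x i j = μ1 i := by
      by_contra hnot
      have h := hθ1s x hxpos hnot
      rw [hFT1, hFxL] at h
      exact lt_irrefl L h
    have hT1fix : P1 μ1 (θ1 x) x = x := P1_fixed _ _ _ hμ1 hxC1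
    have hT2At : ContinuousAt
        (fun γ => P2 μ2 (θ2 (P1 μ1 (θ1 γ) γ)) (P1 μ1 (θ1 γ) γ)) x := by
      have h2 : ContinuousAt (fun δ => P2 μ2 (θ2 δ) δ) (P1 μ1 (θ1 x) x) := by
        rw [hT1fix]; exact contAt_P2 μ2 θ2 x hμ2 hxpos hθ2At
      exact ContinuousAt.comp (f := fun γ => P1 μ1 (θ1 γ) γ) h2 hT1At
    have hTTpos : ∀ i j, 0 < P2 μ2 (θ2 (P1 μ1 (θ1 x) x)) (P1 μ1 (θ1 x) x) i j :=
      P2_pos _ _ _ hμ2 hT1pos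
    have hTtendL : Tendsto (fun k =>
        KL gstar (P2 μ2 (θ2 (P1 μ1 (θ1 (γseq (ψ k))) (γseq (ψ k))))
          (P1 μ1 (θ1 (γseq (ψ k))) (γseq (ψ k))))) atTop (𝓝 L) := by
      have heq : (fun k =>
          KL gstar (P2 μ2 (θ2 (P1 μ1 (θ1 (γseq (ψ k))) (γseq (ψ k))))
            (P1 μ1 (θ1 (γseq (ψ k))) (γseq (ψ k)))))
          = fun k => KL gstar (γseq (ψ k + 1)) := funext fun k => by rw [hrec]
      rw [heq]; exact hlow
    have hFT2 : KL gstar (P2 μ2 (θ2 (P1 μ1 (θ1 x) x)) (P1 μ1 (θ1 x) x)) = L :=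
      tendsto_nhds_unique
        (((ContinuousAt.comp (f := fun γ => P2 μ2 (θ2 (P1 μ1 (θ1 γ) γ)) (P1 μ1 (θ1 γ) γ))
          (contAt_KL gstar _ hgsp hTTpos) hT2At).tendsto).comp hconv) hTtendL
    rw [hT1fix] at hFT2
    have hxC2 : ∀ j, ∑ i, x i j = μ2 j := by
      by_contra hnot
      have h := hθ2s x hxpos hnot
      rw [hFT2, hFxL] at h
      exact lt_irrefl L h
    -- invariant passes to the limit
    have hInvx : ∀ i j, x i j * x i0 j0 * (γ0 i j0 * γ0 i0 j)
        = x i j0 * x i0 j * (γ0 i j * γ0 i0 j0) := by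
      intro i j
      have hev : ∀ (a : Fin n1) (b : Fin n2),
          Tendsto (fun k => γseq (ψ k) a b) atTop (𝓝 (x a b)) :=
        fun a b => ((contAt_eval a b x).tendsto).comp hconv
      have h1 : Tendsto (fun k => γseq (ψ k) i j * γseq (ψ k) i0 j0 * (γ0 i j0 * γ0 i0 j))
          atTop (𝓝 (x i j * x i0 j0 * (γ0 i j0 * γ0 i0 j))) :=
        ((hev i j).mul (hev i0 j0)).mul tendsto_const_nhds
      have h2 : Tendsto (fun k => γseq (ψ k) i j0 * γseq (ψ k) i0 j * (γ0 i j * γ0 i0 j0))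
          atTop (𝓝 (x i j0 * x i0 j * (γ0 i j * γ0 i0 j0))) :=
        ((hev i j0).mul (hev i0 j)).mul tendsto_const_nhds
      have heq : (fun k => γseq (ψ k) i j * γseq (ψ k) i0 j0 * (γ0 i j0 * γ0 i0 j))
          = fun k => γseq (ψ k) i j0 * γseq (ψ k) i0 j * (γ0 i j * γ0 i0 j0) :=
        funext fun k => hInvSeq (ψ k) i j
      rw [heq] at h1
      exact tendsto_nhds_unique h1 h2
    -- reconstruct the scaling and conclude by uniqueness
    set cv : Fin n1 → ℝ := fun i => (x i j0 / γ0 i j0) / a' i with hcv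
    set dv : Fin n2 → ℝ := fun j =>
      (x i0 j * γ0 i0 j0 / (γ0 i0 j * x i0 j0)) / b' j with hdv
    have hcpos : ∀ i, 0 < cv i :=
      fun i => div_pos (div_pos (hxpos i j0) (hγ0 i j0)) (ha' i)
    have hdpos : ∀ j, 0 < dv j :=
      fun j => div_pos (div_pos (mul_pos (hxpos i0 j) (hγ0 i0 j0))
        (mul_pos (hγ0 i0 j) (hxpos i0 j0))) (hb' j)
    have hxy : ∀ i j, x i j = cv i * dv j * gstar i j := by
      intro i j
      have hgs : gstar i j = a' i * γ0 i j * b' j := by rw [hgseq]; rfl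
      rw [hgs]
      simp only [hcv, hdv]
      field_simp [(ha' i).ne', (hb' j).ne', (hγ0 i j0).ne', (hγ0 i0 j).ne',
        (hxpos i0 j0).ne']
      linear_combination hInvx i j
    exact unique_scaling μ1 μ2 x gstar hxpos hgsp cv dv hcpos hdpos hxy hxC1 hxC2 hgs1 hgs2
  -- conclude
  apply tendsto_of_subseq_tendsto
  intro ns hns
  obtain ⟨x, hxK, φ, hφ, hconv⟩ := hKcompact.tendsto_subseq (fun k => hseqK (ns k))
  refine ⟨φ, ?_⟩
  have hx : x = gstar := key (fun n => ns (φ n)) (hns.comp hφ.tendsto_atTop) x hconv hxK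
  rw [hx] at hconv
  exact hconv
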